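/- Let X ∈ ℝ^{n×N}, Y ∈ ℝ^{p×N}, and for σ > 0 let W_σ* = Y Xᵀ (X Xᵀ + σ²N·Id)⁻¹. Then for 0 < σ_{t+1} ≤ σ_t, ‖W_{σ_{t+1}}* − W_{σ_t}*‖_F ≤ N(σ_t² − σ_{t+1}²)·‖Y Xᵀ [(X Xᵀ)⁺]²‖_F. -/

import Mathlib

open Matrix

noncomputable def frobNorm {m n : ℕ} (A : Matrix (Fin m) (Fin n) ℝ) : ℝ :=
  Real.sqrt (∑ i, ∑ j, (A i j) ^ 2)

/-- `P` is the Moore–Penrose pseudoinverse of `A`: the four Penrose equations. -/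
def IsMoorePenrose {n : ℕ} (A P : Matrix (Fin n) (Fin n) ℝ) : Prop :=
  A * P * A = A ∧ P * A * P = P ∧ (A * P)ᵀ = A * P ∧ (P * A)ᵀ = P * A

lemma frobNorm_eq_sqrt_trace {m n : ℕ} (A : Matrix (Fin m) (Fin n) ℝ) :
    frobNorm A = Real.sqrt ((A * Aᵀ).trace) := by
  unfold frobNorm
  congr 1
  simp [Matrix.trace, Matrix.diag, Matrix.mul_apply, sq]

lemma frobNorm_smul {m n : ℕ} {c : ℝ} (hc : 0 ≤ c) (A : Matrix (Fin m) (Fin n) ℝ) :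
    frobNorm (c • A) = c * frobNorm A := by
  unfold frobNorm
  rw [← Real.sqrt_sq hc, ← Real.sqrt_mul (sq_nonneg c)]
  congr 1
  rw [Real.sqrt_sq hc]
  simp [mul_pow, Finset.mul_sum]

lemma trace_nonneg_of_posSemidef {k : ℕ} {A : Matrix (Fin k) (Fin k) ℝ}
    (hA : A.PosSemidef) : 0 ≤ A.trace := by
  exact hA.trace_nonneg

lemma posSemidef_smul {k : ℕ} {A : Matrix (Fin k) (Fin k) ℝ} (hA : A.PosSemidef)
    {c : ℝ} (hc : 0 ≤ c) : (c • A).PosSemidef := by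
  exact hA.smul hc

lemma commute_inv {k : ℕ} {Q M : Matrix (Fin k) (Fin k) ℝ} (hQ : IsUnit Q.det)
    (h : M * Q = Q * M) : M * Q⁻¹ = Q⁻¹ * M := by
  calc M * Q⁻¹ = Q⁻¹ * Q * M * Q⁻¹ := by rw [Matrix.nonsing_inv_mul _ hQ, one_mul]
    _ = Q⁻¹ * (M * Q) * Q⁻¹ := by rw [h]; noncomm_ring
    _ = Q⁻¹ * M * (Q * Q⁻¹) := by noncomm_ring
    _ = Q⁻¹ * M := by rw [Matrix.mul_nonsing_inv _ hQ, mul_one]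

lemma posDef_smul_one {k : ℕ} {c : ℝ} (hc : 0 < c) :
    (c • (1 : Matrix (Fin k) (Fin k) ℝ)).PosDef := by
  exact Matrix.PosDef.one.smul hc

set_option maxHeartbeats 1000000

/-- For `0 < σ_{t+1} ≤ σ_t`, the ridge solutions `W_σ* = Y Xᵀ (X Xᵀ + σ²N·Id)⁻¹`
satisfy `‖W_{σ_{t+1}}* − W_{σ_t}*‖_F ≤ N(σ_t² − σ_{t+1}²)·‖Y Xᵀ [(X Xᵀ)⁺]²‖_F`. -/
theorem stmt_7 {n N p : ℕ} (hN : 1 ≤ N)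
    (X : Matrix (Fin n) (Fin N) ℝ) (Y : Matrix (Fin p) (Fin N) ℝ)
    (P : Matrix (Fin n) (Fin n) ℝ) (hP : IsMoorePenrose (X * Xᵀ) P)
    (σt σt1 : ℝ) (h0 : 0 < σt1) (hle : σt1 ≤ σt) :
    frobNorm
        (Y * Xᵀ * (X * Xᵀ + (σt1 ^ 2 * (N : ℝ)) • (1 : Matrix (Fin n) (Fin n) ℝ))⁻¹
          - Y * Xᵀ * (X * Xᵀ + (σt ^ 2 * (N : ℝ)) • (1 : Matrix (Fin n) (Fin n) ℝ))⁻¹)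
      ≤ (N : ℝ) * (σt ^ 2 - σt1 ^ 2) * frobNorm (Y * Xᵀ * (P * P)) := by
  obtain ⟨h1, h2, h3, h4⟩ := hP
  set A := X * Xᵀ with hA_def
  have hAT : Aᵀ = A := by rw [hA_def, transpose_mul, transpose_transpose]
  set a := σt1 ^ 2 * (N : ℝ) with ha_def
  set b := σt ^ 2 * (N : ℝ) with hb_def
  have hNpos : (0:ℝ) < N := by exact_mod_cast Nat.lt_of_lt_of_le Nat.zero_lt_one hN
  have ha : 0 < a := by have := h0; positivity
  have hab : a ≤ b := by
    have h2' : σt1 ^ 2 ≤ σt ^ 2 := pow_le_pow_left₀ h0.le hle 2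
    exact mul_le_mul_of_nonneg_right h2' hNpos.le
  have hba : 0 ≤ b - a := sub_nonneg.mpr hab
  set Qa := A + a • (1 : Matrix (Fin n) (Fin n) ℝ) with hQa_def
  set Qb := A + b • (1 : Matrix (Fin n) (Fin n) ℝ) with hQb_def
  have hA_psd : A.PosSemidef := by
    have := Matrix.posSemidef_self_mul_conjTranspose X
    simpa [Matrix.conjTranspose_eq_transpose_of_trivial] using this
  have hQa_pd : Qa.PosDef := Matrix.PosDef.posSemidef_add hA_psd (posDef_smul_one ha)
  have hQb_pd : Qb.PosDef :=
    Matrix.PosDef.posSemidef_add hA_psd (posDef_smul_one (lt_of_lt_of_le ha hab))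
  have hdQa : IsUnit Qa.det := hQa_pd.det_pos.ne'.isUnit
  have hdQb : IsUnit Qb.det := hQb_pd.det_pos.ne'.isUnit
  set Ra := Qa⁻¹ with hRa_def
  set Rb := Qb⁻¹ with hRb_def
  have hRaQa : Ra * Qa = 1 := Matrix.nonsing_inv_mul _ hdQa
  have hQaRa : Qa * Ra = 1 := Matrix.mul_nonsing_inv _ hdQa
  have hRbQb : Rb * Qb = 1 := Matrix.nonsing_inv_mul _ hdQb
  have hQbRb : Qb * Rb = 1 := Matrix.mul_nonsing_inv _ hdQb
  -- commutation facts
  have hAQa : A * Qa = Qa * A := by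
    rw [hQa_def]; simp [mul_add, add_mul, Matrix.mul_smul, Matrix.smul_mul]
  have hAQb : A * Qb = Qb * A := by
    rw [hQb_def]; simp [mul_add, add_mul, Matrix.mul_smul, Matrix.smul_mul]
  have hQaQb : Qa * Qb = Qb * Qa := by
    rw [hQa_def, hQb_def]
    simp only [mul_add, add_mul, Matrix.mul_smul, Matrix.smul_mul, one_mul, mul_one, smul_smul]
    rw [mul_comm a b]
    abel
  have hARa : A * Ra = Ra * A := commute_inv hdQa hAQa
  have hARb : A * Rb = Rb * A := commute_inv hdQb hAQb
  have hQbRa : Qb * Ra = Ra * Qb := commute_inv hdQa hQaQb.symm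
  have hQaRb : Qa * Rb = Rb * Qa := commute_inv hdQb hQaQb
  have hRaRb : Ra * Rb = Rb * Ra := commute_inv hdQb hQbRa.symm
  have hQaT : Qaᵀ = Qa := by rw [hQa_def, transpose_add, hAT, transpose_smul, transpose_one]
  have hQbT : Qbᵀ = Qb := by rw [hQb_def, transpose_add, hAT, transpose_smul, transpose_one]
  have hRaT : Raᵀ = Ra := by rw [hRa_def, Matrix.transpose_nonsing_inv, hQaT]
  have hRbT : Rbᵀ = Rb := by rw [hRb_def, Matrix.transpose_nonsing_inv, hQbT]
  set T := Ra * Rb with hT_def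
  have hTT : Tᵀ = T := by
    rw [hT_def, transpose_mul, hRaT, hRbT]; exact hRaRb.symm
  have hAT' : A * T = T * A := by
    calc A * T = (A * Ra) * Rb := by rw [hT_def]; noncomm_ring
      _ = (Ra * A) * Rb := by rw [hARa]
      _ = Ra * (A * Rb) := by noncomm_ring
      _ = Ra * (Rb * A) := by rw [hARb]
      _ = T * A := by rw [hT_def]; noncomm_ring
  have hTAA : T * (A * A) = (A * A) * T := by
    calc T * (A * A) = (T * A) * A := by noncomm_ring
      _ = (A * T) * A := by rw [hAT']
      _ = A * (T * A) := by noncomm_ring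
      _ = A * (A * T) := by rw [hAT']
      _ = (A * A) * T := by noncomm_ring
  have hTQ : T * (Qa * Qb) = 1 := by
    calc T * (Qa * Qb) = Ra * ((Rb * Qa) * Qb) := by rw [hT_def]; noncomm_ring
      _ = Ra * ((Qa * Rb) * Qb) := by rw [hQaRb]
      _ = (Ra * Qa) * (Rb * Qb) := by noncomm_ring
      _ = 1 := by rw [hRaQa, hRbQb, one_mul]
  have hQT : (Qa * Qb) * T = 1 := by
    calc (Qa * Qb) * T = Qa * ((Qb * Ra) * Rb) := by rw [hT_def]; noncomm_ring
      _ = Qa * ((Ra * Qb) * Rb) := by rw [hQbRa]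
      _ = (Qa * Ra) * (Qb * Rb) := by noncomm_ring
      _ = 1 := by rw [hQaRa, hQbRb, one_mul]
  -- P commutation
  have e1 : Pᵀ * A = A * P := by
    calc Pᵀ * A = Pᵀ * Aᵀ := by rw [hAT]
      _ = (A * P)ᵀ := (transpose_mul A P).symm
      _ = A * P := h3
  have e2 : A * Pᵀ = P * A := by
    calc A * Pᵀ = Aᵀ * Pᵀ := by rw [hAT]
      _ = (P * A)ᵀ := (transpose_mul P A).symm
      _ = P * A := h4
  have hAP : A * P = P * A := by
    have c1 : A * P = A * P * (P * A) := by
      calc A * P = Pᵀ * A := e1.symm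
        _ = Pᵀ * (A * P * A) := by rw [h1]
        _ = (Pᵀ * A) * P * A := by noncomm_ring
        _ = (A * P) * P * A := by rw [e1]
        _ = A * P * (P * A) := by noncomm_ring
    have c2 : P * A = A * P * (P * A) := by
      calc P * A = A * Pᵀ := e2.symm
        _ = (A * P * A) * Pᵀ := by rw [h1]
        _ = A * P * (A * Pᵀ) := by noncomm_ring
        _ = A * P * (P * A) := by rw [e2]
    rw [c1, ← c2]
  -- A * P * X = X
  have hAPX : A * P * X = X := by
    have ht : (A * P * X - X)ᵀ = Xᵀ * (A * P) - Xᵀ := by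
      rw [transpose_sub, transpose_mul, h3]
    have key : (A * P * X - X) * (A * P * X - X)ᵀ = 0 := by
      rw [ht, Matrix.sub_mul, Matrix.mul_sub, Matrix.mul_sub]
      have k1 : A * P * X * (Xᵀ * (A * P)) = A * (A * P) := by
        have e : A * P * X * (Xᵀ * (A * P)) = (A * P * (X * Xᵀ)) * (A * P) := by
          simp only [Matrix.mul_assoc]
        rw [e, ← hA_def, h1]
      have k2 : A * P * X * Xᵀ = A := by
        have e : A * P * X * Xᵀ = A * P * (X * Xᵀ) := by simp only [Matrix.mul_assoc]
        rw [e, ← hA_def, h1]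
      have k3 : X * (Xᵀ * (A * P)) = A * (A * P) := by
        have e : X * (Xᵀ * (A * P)) = (X * Xᵀ) * (A * P) := by simp only [Matrix.mul_assoc]
        rw [e, ← hA_def]
      rw [k1, k2, k3, ← hA_def]
      abel
    have hWt : (A * P * X - X)ᵀ = 0 := by
      apply Matrix.conjTranspose_mul_self_eq_zero.mp
      rw [Matrix.conjTranspose_eq_transpose_of_trivial, transpose_transpose]
      exact key
    have hW : A * P * X - X = 0 := by
      have := congrArg transpose hWt
      simpa using this
    exact sub_eq_zero.mp hW
  have hXAP : Xᵀ * (A * P) = Xᵀ := by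
    have := congrArg transpose hAPX
    rw [transpose_mul] at this
    rwa [h3] at this
  have hsq : (P * P) * (A * A) = (A * P) * (A * P) := by
    calc (P * P) * (A * A) = P * (P * A) * A := by noncomm_ring
      _ = P * (A * P) * A := by rw [hAP]
      _ = (P * A) * (P * A) := by noncomm_ring
      _ = (A * P) * (P * A) := by rw [hAP]
      _ = (A * P) * (A * P) := by rw [← hAP]
  have hYX : Y * Xᵀ = (Y * Xᵀ * (P * P)) * (A * A) := by
    calc Y * Xᵀ = Y * (Xᵀ * (A * P)) := by conv_rhs => rw [hXAP]
      _ = Y * ((Xᵀ * (A * P)) * (A * P)) := by conv_rhs => rw [hXAP]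
      _ = Y * (Xᵀ * ((A * P) * (A * P))) := by simp only [Matrix.mul_assoc]
      _ = Y * (Xᵀ * ((P * P) * (A * A))) := by rw [hsq]
      _ = (Y * Xᵀ * (P * P)) * (A * A) := by simp only [Matrix.mul_assoc]
  -- resolvent identity
  have hQdiff : Qb - Qa = (b - a) • (1 : Matrix (Fin n) (Fin n) ℝ) := by
    rw [hQa_def, hQb_def, sub_smul]; abel
  have hres : Ra - Rb = (b - a) • T := by
    calc Ra - Rb = Ra * (Qb * Rb) - (Ra * Qa) * Rb := by rw [hQbRb, hRaQa, mul_one, one_mul]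
      _ = Ra * (Qb - Qa) * Rb := by noncomm_ring
      _ = Ra * ((b - a) • (1 : Matrix (Fin n) (Fin n) ℝ)) * Rb := by rw [hQdiff]
      _ = (b - a) • T := by
          rw [hT_def, mul_smul_comm, smul_mul_assoc, mul_one]
  have hdiff : Y * Xᵀ * Ra - Y * Xᵀ * Rb = (b - a) • (Y * Xᵀ * T) := by
    rw [← Matrix.mul_sub, hres, Matrix.mul_smul]
  set M := Y * Xᵀ * (P * P) with hM_def
  have hC : Y * Xᵀ * T = M * ((A * A) * T) := by
    conv_lhs => rw [hYX]
    simp only [Matrix.mul_assoc]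
  set D := (Qa * Qb) * (Qa * Qb) - (A * A) * (A * A) with hD_def
  have hAAT : (A * A)ᵀ = A * A := by rw [transpose_mul, hAT]
  have hTDT : T * D * T = 1 - (A * A) * (T * (T * (A * A))) := by
    calc T * D * T
        = (T * (Qa * Qb)) * ((Qa * Qb) * T) - (T * (A * A)) * ((A * A) * T) := by
          rw [hD_def]; noncomm_ring
      _ = 1 * 1 - ((A * A) * T) * ((A * A) * T) := by rw [hTQ, hQT, hTAA]
      _ = 1 - (A * A) * (T * ((A * A) * T)) := by noncomm_ring
      _ = 1 - (A * A) * (T * (T * (A * A))) := by rw [← hTAA]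
  have hCt : (M * ((A * A) * T))ᵀ = (T * (A * A)) * Mᵀ := by
    rw [transpose_mul, transpose_mul, hTT, hAAT]
  have hCC : (M * ((A * A) * T)) * (M * ((A * A) * T))ᵀ
      = M * ((A * A) * (T * (T * (A * A)))) * Mᵀ := by
    rw [hCt]; simp only [Matrix.mul_assoc]
  have hkey : M * Mᵀ - (M * ((A * A) * T)) * (M * ((A * A) * T))ᵀ
      = (M * T) * D * (M * T)ᵀ := by
    calc M * Mᵀ - (M * ((A * A) * T)) * (M * ((A * A) * T))ᵀ
        = M * Mᵀ - M * ((A * A) * (T * (T * (A * A)))) * Mᵀ := by rw [hCC]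
      _ = M * (1 - (A * A) * (T * (T * (A * A)))) * Mᵀ := by
          rw [Matrix.mul_sub, Matrix.sub_mul, Matrix.mul_one]
      _ = M * (T * D * T) * Mᵀ := by rw [hTDT]
      _ = (M * T) * D * (M * T)ᵀ := by
          conv_rhs => rw [transpose_mul, hTT]
          simp only [Matrix.mul_assoc]
  have hQQexp : Qa * Qb = A * A + ((a + b) • A + (a * b) • (1 : Matrix (Fin n) (Fin n) ℝ)) := by
    rw [hQa_def, hQb_def]
    simp only [add_mul, mul_add, Matrix.smul_mul, Matrix.mul_smul, smul_smul, one_mul,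
      mul_one, add_smul]
    module
  have hDexp : D = (2 * (a + b)) • (A * (A * A))
      + ((((a + b) ^ 2 + 2 * (a * b))) • (A * A)
      + ((2 * (a * b) * (a + b)) • A + ((a * b) ^ 2) • (1 : Matrix (Fin n) (Fin n) ℝ))) := by
    rw [hD_def, hQQexp]
    simp only [add_mul, mul_add, Matrix.smul_mul, Matrix.mul_smul, smul_smul, smul_add,
      one_mul, mul_one, Matrix.mul_assoc]
    module
  have hA2 : (A * A).PosSemidef := by
    have := hA_psd.pow 2
    rwa [pow_two] at this
  have hA3 : (A * (A * A)).PosSemidef := by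
    have := hA_psd.pow 3
    rwa [show A ^ 3 = A * (A * A) from by rw [pow_succ, pow_two, Matrix.mul_assoc]] at this
  have hb' : 0 < b := lt_of_lt_of_le ha hab
  have hD_psd : D.PosSemidef := by
    rw [hDexp]
    have c1 : (0:ℝ) ≤ 2 * (a + b) := by linarith
    have c2 : (0:ℝ) ≤ (a + b) ^ 2 + 2 * (a * b) := by positivity
    have c3 : (0:ℝ) ≤ 2 * (a * b) * (a + b) := by positivity
    have c4 : (0:ℝ) ≤ (a * b) ^ 2 := by positivity
    exact (posSemidef_smul hA3 c1).add
      ((posSemidef_smul hA2 c2).add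
        ((posSemidef_smul hA_psd c3).add
          (posSemidef_smul Matrix.PosSemidef.one c4)))
  have hpsd_big : ((M * T) * D * (M * T)ᵀ).PosSemidef := by
    have := hD_psd.mul_mul_conjTranspose_same (M * T)
    rwa [Matrix.conjTranspose_eq_transpose_of_trivial] at this
  have htr : ((M * ((A * A) * T)) * (M * ((A * A) * T))ᵀ).trace ≤ (M * Mᵀ).trace := by
    have h0' : 0 ≤ (M * Mᵀ - (M * ((A * A) * T)) * (M * ((A * A) * T))ᵀ).trace := by
      rw [hkey]; exact trace_nonneg_of_posSemidef hpsd_big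
    rw [Matrix.trace_sub] at h0'
    linarith
  have hfrob : frobNorm (Y * Xᵀ * T) ≤ frobNorm M := by
    rw [hC, frobNorm_eq_sqrt_trace, frobNorm_eq_sqrt_trace]
    exact Real.sqrt_le_sqrt htr
  rw [hdiff, frobNorm_smul hba]
  have hco : (N : ℝ) * (σt ^ 2 - σt1 ^ 2) = b - a := by rw [ha_def, hb_def]; ring
  rw [hco]
  exact mul_le_mul_of_nonneg_left hfrob hba
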